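/- Let n ≤ 3 and let P, Q ⊆ ℝ^n be polyhedral cones. If (u,v) is a local minimizer of MA(P,Q) with u ≠ −v, then u is a ray of P or v is a ray of Q. -/

import Mathlib

open Matrix

/-- Euclidean norm of a vector in `ℝ^n`. -/
noncomputable def vnorm {n : ℕ} (v : Fin n → ℝ) : ℝ := Real.sqrt (v ⬝ᵥ v)

/-- The polyhedral cone generated by the columns of `G`. -/
def coneOf {m p : ℕ} (G : Matrix (Fin m) (Fin p) ℝ) : Set (Fin m → ℝ) :=
  {u | ∃ x : Fin p → ℝ, (∀ i, 0 ≤ x i) ∧ u = G.mulVec x}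

/-- `F` is a face of the cone `P`. -/
def IsFace {d : ℕ} (P F : Set (Fin d → ℝ)) : Prop :=
  F ⊆ P ∧ Convex ℝ F ∧ (∀ c : ℝ, 0 ≤ c → ∀ x ∈ F, c • x ∈ F) ∧
    ∀ v₁ v₂, v₁ ∈ P → v₂ ∈ P → v₁ + v₂ ∈ F → v₁ ∈ F ∧ v₂ ∈ F

/-- The dimension of a face: the dimension of its linear span. -/
noncomputable def faceDim {d : ℕ} (F : Set (Fin d → ℝ)) : ℕ :=
  Module.finrank ℝ ↥(Submodule.span ℝ F)

/-- `x` is a ray of the polyhedral cone `P`: a nonzero vector of a one-dimensional face. -/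
def IsRay {d : ℕ} (P : Set (Fin d → ℝ)) (x : Fin d → ℝ) : Prop :=
  x ≠ 0 ∧ ∃ F, IsFace P F ∧ faceDim F = 1 ∧ x ∈ F

namespace Stmt9Aux

variable {n : ℕ}

lemma dp_self_nonneg (x : Fin n → ℝ) : 0 ≤ x ⬝ᵥ x :=
  Finset.sum_nonneg fun _ _ => mul_self_nonneg _

lemma vnorm_one {x : Fin n → ℝ} (h : vnorm x = 1) : x ⬝ᵥ x = 1 :=
  Real.sqrt_eq_one.mp h

lemma cone_add {P : Set (Fin n → ℝ)}
    (hP : ∃ (p : ℕ) (G : Matrix (Fin n) (Fin p) ℝ), P = coneOf G) :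
    ∀ x ∈ P, ∀ y ∈ P, x + y ∈ P := by
  obtain ⟨p, G, rfl⟩ := hP
  rintro x ⟨a, ha, rfl⟩ y ⟨b, hb, rfl⟩
  exact ⟨a + b, fun i => add_nonneg (ha i) (hb i), (Matrix.mulVec_add G a b).symm⟩

lemma cone_smul {P : Set (Fin n → ℝ)}
    (hP : ∃ (p : ℕ) (G : Matrix (Fin n) (Fin p) ℝ), P = coneOf G) :
    ∀ c : ℝ, 0 ≤ c → ∀ x ∈ P, c • x ∈ P := by
  obtain ⟨p, G, rfl⟩ := hP
  rintro c hc x ⟨a, ha, rfl⟩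
  exact ⟨c • a, fun i => mul_nonneg hc (ha i), (Matrix.mulVec_smul G c a).symm⟩

/-- The minimal face of `P` containing `u`. -/
def faceAt (P : Set (Fin n → ℝ)) (u : Fin n → ℝ) : Set (Fin n → ℝ) :=
  {x | x ∈ P ∧ ∃ l : ℝ, 0 < l ∧ l • u - x ∈ P}

lemma mem_faceAt_self {P : Set (Fin n → ℝ)} {u : Fin n → ℝ} (hu : u ∈ P) :
    u ∈ faceAt P u :=
  ⟨hu, 2, by norm_num, by rw [two_smul]; simpa using hu⟩

lemma faceAt_add {P : Set (Fin n → ℝ)} (hadd : ∀ x ∈ P, ∀ y ∈ P, x + y ∈ P)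
    {u x y : Fin n → ℝ} (hx : x ∈ faceAt P u) (hy : y ∈ faceAt P u) :
    x + y ∈ faceAt P u := by
  obtain ⟨hxP, lx, hlx, hlxP⟩ := hx
  obtain ⟨hyP, ly, hly, hlyP⟩ := hy
  refine ⟨hadd _ hxP _ hyP, lx + ly, by positivity, ?_⟩
  have : (lx + ly) • u - (x + y) = (lx • u - x) + (ly • u - y) := by module
  rw [this]; exact hadd _ hlxP _ hlyP

lemma faceAt_smul {P : Set (Fin n → ℝ)} (hsmul : ∀ c : ℝ, 0 ≤ c → ∀ x ∈ P, c • x ∈ P)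
    {u : Fin n → ℝ} (hu : u ∈ P) {c : ℝ} (hc : 0 ≤ c) {x : Fin n → ℝ}
    (hx : x ∈ faceAt P u) : c • x ∈ faceAt P u := by
  obtain ⟨hxP, l, hl, hlP⟩ := hx
  rcases eq_or_lt_of_le hc with hc0 | hc0
  · refine ⟨by simpa [← hc0] using hsmul 0 le_rfl x hxP, 1, one_pos, ?_⟩
    have : (1:ℝ) • u - c • x = u := by rw [← hc0]; module
    rw [this]; exact hu
  · refine ⟨hsmul c hc x hxP, c * l, by positivity, ?_⟩
    have : (c * l) • u - c • x = c • (l • u - x) := by module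
    rw [this]; exact hsmul c hc _ hlP

lemma faceAt_isFace {P : Set (Fin n → ℝ)}
    (hadd : ∀ x ∈ P, ∀ y ∈ P, x + y ∈ P)
    (hsmul : ∀ c : ℝ, 0 ≤ c → ∀ x ∈ P, c • x ∈ P)
    {u : Fin n → ℝ} (hu : u ∈ P) : IsFace P (faceAt P u) := by
  refine ⟨fun x hx => hx.1, ?_, fun c hc x hx => faceAt_smul hsmul hu hc hx, ?_⟩
  · intro x hx y hy a b ha hb hab
    exact faceAt_add hadd (faceAt_smul hsmul hu ha hx) (faceAt_smul hsmul hu hb hy)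
  · intro v₁ v₂ hv₁ hv₂ hsum
    obtain ⟨hP, l, hl, hlP⟩ := hsum
    constructor
    · refine ⟨hv₁, l, hl, ?_⟩
      have : l • u - v₁ = (l • u - (v₁ + v₂)) + v₂ := by module
      rw [this]; exact hadd _ hlP _ hv₂
    · refine ⟨hv₂, l, hl, ?_⟩
      have : l • u - v₂ = (l • u - (v₁ + v₂)) + v₁ := by module
      rw [this]; exact hadd _ hlP _ hv₁

/-- Every element of the span of `faceAt P u` is a difference of two elements. -/
lemma span_faceAt_sub {P : Set (Fin n → ℝ)}
    (hadd : ∀ x ∈ P, ∀ y ∈ P, x + y ∈ P)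
    (hsmul : ∀ c : ℝ, 0 ≤ c → ∀ x ∈ P, c • x ∈ P)
    {u : Fin n → ℝ} (hu : u ∈ P) {z : Fin n → ℝ}
    (hz : z ∈ Submodule.span ℝ (faceAt P u)) :
    ∃ x ∈ faceAt P u, ∃ y ∈ faceAt P u, z = x - y := by
  let S : Submodule ℝ (Fin n → ℝ) :=
  { carrier := {z | ∃ x ∈ faceAt P u, ∃ y ∈ faceAt P u, z = x - y}
    add_mem' := by
      rintro a b ⟨xa, hxa, ya, hya, rfl⟩ ⟨xb, hxb, yb, hyb, rfl⟩
      exact ⟨xa + xb, faceAt_add hadd hxa hxb, ya + yb, faceAt_add hadd hya hyb,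
        by module⟩
    zero_mem' := ⟨u, mem_faceAt_self hu, u, mem_faceAt_self hu, by module⟩
    smul_mem' := by
      rintro c a ⟨x, hx, y, hy, rfl⟩
      rcases le_or_gt 0 c with hc | hc
      · exact ⟨c • x, faceAt_smul hsmul hu hc hx, c • y, faceAt_smul hsmul hu hc hy,
          by module⟩
      · exact ⟨(-c) • y, faceAt_smul hsmul hu (by linarith) hy,
          (-c) • x, faceAt_smul hsmul hu (by linarith) hx, by module⟩ }
  have hle : Submodule.span ℝ (faceAt P u) ≤ S := by
    rw [Submodule.span_le]
    intro x hx
    exact ⟨x + u, faceAt_add hadd hx (mem_faceAt_self hu), u, mem_faceAt_self hu, by module⟩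
  exact hle hz

/-- Perturbation lemma: moving from `u` in a span-of-face direction stays in `P`. -/
lemma perturb {P : Set (Fin n → ℝ)}
    (hadd : ∀ x ∈ P, ∀ y ∈ P, x + y ∈ P)
    (hsmul : ∀ c : ℝ, 0 ≤ c → ∀ x ∈ P, c • x ∈ P)
    {u : Fin n → ℝ} (hu : u ∈ P) {z : Fin n → ℝ}
    (hz : z ∈ Submodule.span ℝ (faceAt P u)) :
    ∃ ε > 0, ∀ s : ℝ, 0 ≤ s → s ≤ ε → u + s • z ∈ P := by
  obtain ⟨x, hx, y, hy, rfl⟩ := span_faceAt_sub hadd hsmul hu hz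
  obtain ⟨hyP, l, hl, hlP⟩ := hy
  refine ⟨l⁻¹, by positivity, fun s hs hsl => ?_⟩
  have h1 : 0 ≤ 1 - s * l := by
    have : s * l ≤ l⁻¹ * l := by nlinarith
    rw [inv_mul_cancel₀ (ne_of_gt hl)] at this
    linarith
  have key : u + s • (x - y) = ((1 - s * l) • u + s • (l • u - y)) + s • x := by module
  rw [key]
  exact hadd _ (hadd _ (hsmul _ h1 _ hu) _ (hsmul _ hs _ hlP)) _ (hsmul _ hs _ hx.1)

/-- Normalization. -/
lemma normalize {x : Fin n → ℝ} (hx : x ≠ 0) :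
    ∃ c : ℝ, 0 < c ∧ (c • x) ⬝ᵥ (c • x) = 1 := by
  have hq : 0 < x ⬝ᵥ x :=
    lt_of_le_of_ne (dp_self_nonneg x) (fun h => hx (dotProduct_self_eq_zero.mp h.symm))
  refine ⟨(Real.sqrt (x ⬝ᵥ x))⁻¹, by positivity, ?_⟩
  rw [smul_dotProduct, dotProduct_smul, smul_eq_mul, smul_eq_mul]
  rw [show x ⬝ᵥ x = Real.sqrt (x ⬝ᵥ x) * Real.sqrt (x ⬝ᵥ x) from
    (Real.mul_self_sqrt hq.le).symm]
  have : Real.sqrt (x ⬝ᵥ x) ≠ 0 := by positivity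
  field_simp
  rw [Real.sqrt_sq (Real.sqrt_nonneg _)]

lemma exists_unit_perp {L : Submodule ℝ (Fin n → ℝ)} {u : Fin n → ℝ}
    (hu : u ∈ L) (huu : u ⬝ᵥ u = 1) (hdim : 2 ≤ Module.finrank ℝ L) :
    ∃ a, a ∈ L ∧ a ⬝ᵥ u = 0 ∧ a ⬝ᵥ a = 1 := by
  have hu0 : u ≠ 0 := by
    intro h; rw [h] at huu; simp [dotProduct] at huu
  obtain ⟨x, hxL, hxs⟩ : ∃ x ∈ L, x ∉ Submodule.span ℝ {u} := by
    by_contra h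
    push_neg at h
    have hle : L ≤ Submodule.span ℝ {u} := h
    have := Submodule.finrank_mono (M := Fin n → ℝ) (R := ℝ) hle
    rw [finrank_span_singleton hu0] at this
    omega
  set a' := x - (x ⬝ᵥ u) • u with ha'
  have ha'L : a' ∈ L := Submodule.sub_mem L hxL (Submodule.smul_mem L _ hu)
  have ha'u : a' ⬝ᵥ u = 0 := by
    rw [ha', sub_dotProduct, smul_dotProduct, smul_eq_mul, huu]; ring
  have ha'0 : a' ≠ 0 := by
    intro h
    apply hxs
    have : x = (x ⬝ᵥ u) • u := by
      have := sub_eq_zero.mp h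
      linear_combination (norm := module) this
    rw [this]
    exact Submodule.smul_mem _ _ (Submodule.mem_span_singleton_self u)
  obtain ⟨c, hc, hcc⟩ := normalize ha'0
  refine ⟨c • a', Submodule.smul_mem L c ha'L, ?_, hcc⟩
  rw [smul_dotProduct, smul_eq_mul, ha'u, mul_zero]

lemma exists_unit_inter (hn : n ≤ 3) {L M : Submodule ℝ (Fin n → ℝ)}
    (hL : 2 ≤ Module.finrank ℝ L) (hM : 2 ≤ Module.finrank ℝ M) :
    ∃ w, w ∈ L ∧ w ∈ M ∧ w ⬝ᵥ w = 1 := by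
  have hsum := Submodule.finrank_sup_add_finrank_inf_eq L M
  have hsup : Module.finrank ℝ ↥(L ⊔ M) ≤ n := by
    have := Submodule.finrank_le (L ⊔ M)
    rwa [Module.finrank_fin_fun] at this
  have hinf : 0 < Module.finrank ℝ ↥(L ⊓ M) := by omega
  have hne : L ⊓ M ≠ ⊥ := by
    intro h
    rw [h, finrank_bot] at hinf
    omega
  obtain ⟨w, hw, hw0⟩ := Submodule.ne_bot_iff _ |>.mp hne
  obtain ⟨c, hc, hcc⟩ := normalize hw0
  exact ⟨c • w, Submodule.smul_mem _ _ hw.1, Submodule.smul_mem _ _ hw.2, hcc⟩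

lemma feas {P : Set (Fin n → ℝ)}
    (hsmul : ∀ c : ℝ, 0 ≤ c → ∀ x ∈ P, c • x ∈ P)
    {u a : Fin n → ℝ} (huu : u ⬝ᵥ u = 1) (hau : a ⬝ᵥ u = 0) (haa : a ⬝ᵥ a = 1)
    {s : ℝ} (hs : 0 ≤ s) (hmem : u + s • a ∈ P) :
    (Real.sqrt (1 + s^2))⁻¹ • (u + s • a) ∈ P ∧
      vnorm ((Real.sqrt (1 + s^2))⁻¹ • (u + s • a)) = 1 ∧
      vnorm ((Real.sqrt (1 + s^2))⁻¹ • (u + s • a) - u) ≤ 2 * s := by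
  have hua : u ⬝ᵥ a = 0 := by rw [dotProduct_comm]; exact hau
  set r := Real.sqrt (1 + s^2) with hrdef
  have h1s : (0:ℝ) < 1 + s^2 := by positivity
  have hr0 : 0 < r := Real.sqrt_pos.mpr h1s
  have hrr : r * r = 1 + s^2 := Real.mul_self_sqrt h1s.le
  have hr1 : 1 ≤ r := by rw [hrdef, Real.one_le_sqrt]; nlinarith
  have hrle : r ≤ 1 + s^2 := by
    rw [hrdef]
    calc Real.sqrt (1 + s^2) ≤ Real.sqrt ((1 + s^2)^2) :=
          Real.sqrt_le_sqrt (by nlinarith)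
      _ = 1 + s^2 := Real.sqrt_sq h1s.le
  have hrinv : r * r⁻¹ = 1 := mul_inv_cancel₀ hr0.ne'
  have hX : (u + s • a) ⬝ᵥ (u + s • a) = 1 + s^2 := by
    simp [dotProduct_add, add_dotProduct, dotProduct_smul,
      smul_dotProduct, huu, haa, hau, hua, smul_eq_mul]
    ring
  have hXu : (u + s • a) ⬝ᵥ u = 1 := by
    simp [add_dotProduct, smul_dotProduct, huu, hau, smul_eq_mul]
  have hself : (r⁻¹ • (u + s • a)) ⬝ᵥ (r⁻¹ • (u + s • a)) = 1 := by
    rw [smul_dotProduct, dotProduct_smul, smul_eq_mul, smul_eq_mul, hX]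
    field_simp
    nlinarith
  refine ⟨hsmul r⁻¹ (by positivity) _ hmem, ?_, ?_⟩
  · rw [vnorm, hself, Real.sqrt_one]
  · have hdiff : (r⁻¹ • (u + s • a) - u) ⬝ᵥ (r⁻¹ • (u + s • a) - u) = 2 - 2 * r⁻¹ := by
      rw [sub_dotProduct, dotProduct_sub, dotProduct_sub, hself,
        smul_dotProduct, dotProduct_smul, smul_eq_mul, smul_eq_mul, hXu,
        dotProduct_comm u (u + s • a), hXu, huu]
      ring
    have hbound : 2 - 2 * r⁻¹ ≤ (2 * s)^2 := by nlinarith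
    rw [vnorm, hdiff]
    calc Real.sqrt (2 - 2 * r⁻¹) ≤ Real.sqrt ((2*s)^2) := Real.sqrt_le_sqrt hbound
      _ = 2 * s := Real.sqrt_sq (by positivity)

lemma engine1 {P Q : Set (Fin n → ℝ)}
    (hsmul : ∀ c : ℝ, 0 ≤ c → ∀ x ∈ P, c • x ∈ P)
    {u v a : Fin n → ℝ}
    (hv : v ∈ Q) (huu : u ⬝ᵥ u = 1) (hvv : vnorm v = 1)
    (hau : a ⬝ᵥ u = 0) (haa : a ⬝ᵥ a = 1)
    {ε : ℝ} (hε : 0 < ε)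
    (hmin : ∀ u' ∈ P, ∀ v' ∈ Q, vnorm u' = 1 → vnorm v' = 1 →
        vnorm (u' - u) < ε → vnorm (v' - v) < ε → u ⬝ᵥ v ≤ u' ⬝ᵥ v')
    {s : ℝ} (hs : 0 < s) (hsε : 2 * s < ε) (hmem : u + s • a ∈ P) :
    (u ⬝ᵥ v) * Real.sqrt (1 + s^2) ≤ u ⬝ᵥ v + s * (a ⬝ᵥ v) := by
  obtain ⟨hmemP, hn1, hclose⟩ := feas hsmul huu hau haa hs.le hmem
  set r := Real.sqrt (1 + s^2) with hrdef
  have hr0 : 0 < r := Real.sqrt_pos.mpr (by positivity)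
  have hvd : vnorm (v - v) < ε := by
    simp only [sub_self]
    rw [vnorm, zero_dotProduct, Real.sqrt_zero]
    exact hε
  have h := hmin _ hmemP _ hv hn1 hvv (lt_of_le_of_lt hclose hsε) hvd
  rw [smul_dotProduct, smul_eq_mul, add_dotProduct,
    smul_dotProduct, smul_eq_mul] at h
  calc (u ⬝ᵥ v) * r ≤ (r⁻¹ * (u ⬝ᵥ v + s * (a ⬝ᵥ v))) * r := by
        apply mul_le_mul_of_nonneg_right _ hr0.le
        exact h
    _ = u ⬝ᵥ v + s * (a ⬝ᵥ v) := by field_simp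

lemma engine2 {P Q : Set (Fin n → ℝ)}
    (hsmulP : ∀ c : ℝ, 0 ≤ c → ∀ x ∈ P, c • x ∈ P)
    (hsmulQ : ∀ c : ℝ, 0 ≤ c → ∀ x ∈ Q, c • x ∈ Q)
    {u v a b : Fin n → ℝ}
    (huu : u ⬝ᵥ u = 1) (hvv : v ⬝ᵥ v = 1)
    (hau : a ⬝ᵥ u = 0) (haa : a ⬝ᵥ a = 1)
    (hbv : b ⬝ᵥ v = 0) (hbb : b ⬝ᵥ b = 1)
    {ε : ℝ} (hε : 0 < ε)
    (hmin : ∀ u' ∈ P, ∀ v' ∈ Q, vnorm u' = 1 → vnorm v' = 1 →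
        vnorm (u' - u) < ε → vnorm (v' - v) < ε → u ⬝ᵥ v ≤ u' ⬝ᵥ v')
    {s : ℝ} (hs : 0 < s) (hsε : 2 * s < ε)
    (hmemP : u + s • a ∈ P) (hmemQ : v + s • b ∈ Q) :
    (u ⬝ᵥ v) * (1 + s^2) ≤ (u + s • a) ⬝ᵥ (v + s • b) := by
  obtain ⟨hP1, hn1, hclose1⟩ := feas hsmulP huu hau haa hs.le hmemP
  obtain ⟨hQ1, hn2, hclose2⟩ := feas hsmulQ hvv hbv hbb hs.le hmemQ
  set r := Real.sqrt (1 + s^2) with hrdef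
  have hr0 : 0 < r := Real.sqrt_pos.mpr (by positivity)
  have hrr : r * r = 1 + s^2 := Real.mul_self_sqrt (by positivity)
  have h := hmin _ hP1 _ hQ1 hn1 hn2 (lt_of_le_of_lt hclose1 hsε)
    (lt_of_le_of_lt hclose2 hsε)
  rw [smul_dotProduct, dotProduct_smul, smul_eq_mul, smul_eq_mul] at h
  calc (u ⬝ᵥ v) * (1 + s^2) = ((u ⬝ᵥ v) * r) * r := by rw [mul_assoc, hrr]
    _ ≤ ((r⁻¹ * (r⁻¹ * ((u + s • a) ⬝ᵥ (v + s • b)))) * r) * r := by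
        apply mul_le_mul_of_nonneg_right _ hr0.le
        apply mul_le_mul_of_nonneg_right h hr0.le
    _ = (u + s • a) ⬝ᵥ (v + s • b) := by field_simp

set_option maxHeartbeats 1000000 in
/-- First-order conditions at the local minimizer. -/
lemma stationary {P Q : Set (Fin n → ℝ)}
    (hadd : ∀ x ∈ P, ∀ y ∈ P, x + y ∈ P)
    (hsmul : ∀ c : ℝ, 0 ≤ c → ∀ x ∈ P, c • x ∈ P)
    {u v : Fin n → ℝ} (hu : u ∈ P) (hv : v ∈ Q)
    (huu : u ⬝ᵥ u = 1) (hvv : vnorm v = 1)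
    {ε : ℝ} (hε : 0 < ε)
    (hmin : ∀ u' ∈ P, ∀ v' ∈ Q, vnorm u' = 1 → vnorm v' = 1 →
        vnorm (u' - u) < ε → vnorm (v' - v) < ε → u ⬝ᵥ v ≤ u' ⬝ᵥ v')
    (hL2 : 2 ≤ Module.finrank ℝ (Submodule.span ℝ (faceAt P u))) :
    u ⬝ᵥ v ≤ 0 ∧
      ∀ x ∈ Submodule.span ℝ (faceAt P u), x ⬝ᵥ u = 0 → x ⬝ᵥ v = 0 := by
  set L := Submodule.span ℝ (faceAt P u) with hLdef
  have huL : u ∈ L := Submodule.subset_span (mem_faceAt_self hu)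
  set t := u ⬝ᵥ v with htdef
  -- the basic local-minimality inequality for a unit direction
  have tool : ∀ a, a ∈ L → a ⬝ᵥ u = 0 → a ⬝ᵥ a = 1 →
      ∃ δ > 0, ∀ s : ℝ, 0 < s → s ≤ δ →
        t * Real.sqrt (1 + s^2) ≤ t + s * (a ⬝ᵥ v) := by
    intro a haL hau haa
    obtain ⟨δ₁, hδ₁, hδP⟩ := perturb hadd hsmul hu haL
    refine ⟨min δ₁ (ε/4), lt_min hδ₁ (by positivity), fun s hs hsδ => ?_⟩
    have h1 : s ≤ δ₁ := le_trans hsδ (min_le_left _ _)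
    have h2 : 2 * s < ε := by
      have := le_trans hsδ (min_le_right _ _); linarith
    exact engine1 hsmul hv huu hvv hau haa hε hmin hs h2 (hδP s hs.le h1)
  -- two-sided version: for all small s, |s * (a ⬝ᵥ v)| is controlled
  have tool2 : ∀ a, a ∈ L → a ⬝ᵥ u = 0 → a ⬝ᵥ a = 1 →
      ∃ δ > 0, ∀ s : ℝ, 0 < s → s ≤ δ →
        (t * Real.sqrt (1 + s^2) ≤ t + s * (a ⬝ᵥ v) ∧
         t * Real.sqrt (1 + s^2) ≤ t - s * (a ⬝ᵥ v)) := by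
    intro a haL hau haa
    obtain ⟨δ₁, hδ₁, h1⟩ := tool a haL hau haa
    have hnegu : (-a) ⬝ᵥ u = 0 := by rw [neg_dotProduct, hau, neg_zero]
    have hnega : (-a) ⬝ᵥ (-a) = 1 := by
      rw [neg_dotProduct, dotProduct_neg, haa]; ring
    obtain ⟨δ₂, hδ₂, h2⟩ := tool (-a) (Submodule.neg_mem L haL) hnegu hnega
    refine ⟨min δ₁ δ₂, lt_min hδ₁ hδ₂, fun s hs hsδ => ?_⟩
    refine ⟨h1 s hs (le_trans hsδ (min_le_left _ _)), ?_⟩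
    have := h2 s hs (le_trans hsδ (min_le_right _ _))
    rw [neg_dotProduct] at this
    linarith
  -- t ≤ 0
  obtain ⟨a₀, ha₀L, ha₀u, ha₀a⟩ := exists_unit_perp huL huu hL2
  have ht0 : t ≤ 0 := by
    obtain ⟨δ, hδ, hss⟩ := tool2 a₀ ha₀L ha₀u ha₀a
    obtain ⟨hA, hB⟩ := hss δ hδ le_rfl
    have hgt : 1 < Real.sqrt (1 + δ^2) :=
      (Real.lt_sqrt (by norm_num)).mpr (by nlinarith)
    nlinarith
  refine ⟨ht0, ?_⟩
  intro x hxL hxu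
  rcases eq_or_ne x 0 with rfl | hx0
  · exact zero_dotProduct v
  obtain ⟨c, hc, hcc⟩ := normalize hx0
  have hcau : (c • x) ⬝ᵥ u = 0 := by
    rw [smul_dotProduct, smul_eq_mul, hxu, mul_zero]
  obtain ⟨δ, hδ, hss⟩ := tool2 (c • x) (Submodule.smul_mem L c hxL) hcau hcc
  set C := (c • x) ⬝ᵥ v with hC
  -- for all small s : |C| ≤ -t * s
  have hsmall : ∀ s : ℝ, 0 < s → s ≤ δ → s * |C| ≤ -t * s^2 := by
    intro s hs hsδ
    obtain ⟨hA, hB⟩ := hss s hs hsδ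
    have h1s : (0:ℝ) < 1 + s^2 := by positivity
    have hr1 : 1 ≤ Real.sqrt (1 + s^2) := by rw [Real.one_le_sqrt]; nlinarith
    have hrle : Real.sqrt (1 + s^2) ≤ 1 + s^2 := by
      calc Real.sqrt (1 + s^2) ≤ Real.sqrt ((1 + s^2)^2) :=
            Real.sqrt_le_sqrt (by nlinarith)
        _ = 1 + s^2 := Real.sqrt_sq h1s.le
    -- t * (r - 1) ≥ t * s^2 since t ≤ 0 and r - 1 ≤ s^2
    have hprod : 0 ≤ (-t) * ((1 + s^2) - Real.sqrt (1 + s^2)) :=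
      mul_nonneg (by linarith) (by linarith)
    have hkey1 : t * s^2 ≤ s * C := by nlinarith [hprod, hA]
    have hkey2 : t * s^2 ≤ -(s * C) := by nlinarith [hprod, hB]
    rcases le_or_gt 0 C with h | h
    · rw [abs_of_nonneg h]; nlinarith
    · rw [abs_of_neg h]; nlinarith
  have hC0 : C = 0 := by
    by_contra hC0
    have habs : 0 < |C| := abs_pos.mpr hC0
    set s := min δ (|C| / (1 - t)) with hsdef
    have h1t : (0:ℝ) < 1 - t := by linarith
    have hs0 : 0 < s := lt_min hδ (div_pos habs h1t)
    have hs1 : s ≤ δ := min_le_left _ _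
    have hs2 : s * (1 - t) ≤ |C| := by
      have : s ≤ |C| / (1 - t) := min_le_right _ _
      rw [le_div_iff₀ h1t] at this
      linarith
    have hfin := hsmall s hs0 hs1
    nlinarith [mul_le_mul_of_nonneg_left hs2 hs0.le, mul_pos hs0 hs0]
  have : C = c * (x ⬝ᵥ v) := by rw [hC, smul_dotProduct, smul_eq_mul]
  rw [this] at hC0
  rcases mul_eq_zero.mp hC0 with h | h
  · exact absurd h (ne_of_gt hc)
  · exact h

lemma notray_dim {P : Set (Fin n → ℝ)}
    (hadd : ∀ x ∈ P, ∀ y ∈ P, x + y ∈ P)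
    (hsmul : ∀ c : ℝ, 0 ≤ c → ∀ x ∈ P, c • x ∈ P)
    {u : Fin n → ℝ} (hu : u ∈ P) (hu0 : u ≠ 0) (hnr : ¬ IsRay P u) :
    2 ≤ Module.finrank ℝ (Submodule.span ℝ (faceAt P u)) := by
  have hface := faceAt_isFace hadd hsmul hu
  have humem := mem_faceAt_self hu
  have h1 : 1 ≤ Module.finrank ℝ (Submodule.span ℝ (faceAt P u)) := by
    have hle : Submodule.span ℝ ({u} : Set (Fin n → ℝ)) ≤ Submodule.span ℝ (faceAt P u) :=
      Submodule.span_mono (Set.singleton_subset_iff.mpr humem)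
    have := Submodule.finrank_mono (M := Fin n → ℝ) (R := ℝ) hle
    rwa [finrank_span_singleton hu0] at this
  have hne1 : faceDim (faceAt P u) ≠ 1 := by
    intro h
    exact hnr ⟨hu0, faceAt P u, hface, h, humem⟩
  have : faceDim (faceAt P u) = Module.finrank ℝ (Submodule.span ℝ (faceAt P u)) := rfl
  omega

end Stmt9Aux

open Stmt9Aux in
/-- In dimension `n ≤ 3`, any local minimizer `(u,v)` of `MA(P,Q)` with `u ≠ -v` has `u`
a ray of `P` or `v` a ray of `Q`. -/
theorem stmt9 {n : ℕ} (hn : n ≤ 3) (P Q : Set (Fin n → ℝ))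
    (hP : ∃ (p : ℕ) (G : Matrix (Fin n) (Fin p) ℝ), P = coneOf G)
    (hQ : ∃ (q : ℕ) (H : Matrix (Fin n) (Fin q) ℝ), Q = coneOf H)
    (u v : Fin n → ℝ)
    (hu : u ∈ P) (hv : v ∈ Q) (hnu : vnorm u = 1) (hnv : vnorm v = 1)
    (hlocmin : ∃ ε > (0:ℝ), ∀ u' ∈ P, ∀ v' ∈ Q, vnorm u' = 1 → vnorm v' = 1 →
        vnorm (u' - u) < ε → vnorm (v' - v) < ε → u ⬝ᵥ v ≤ u' ⬝ᵥ v')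
    (hne : u ≠ -v) :
    IsRay P u ∨ IsRay Q v := by
  by_contra hcon
  push_neg at hcon
  obtain ⟨hnru, hnrv⟩ := hcon
  obtain ⟨ε, hε, hmin⟩ := hlocmin
  have haddP := cone_add hP
  have hsmulP := cone_smul hP
  have haddQ := cone_add hQ
  have hsmulQ := cone_smul hQ
  have huu := vnorm_one hnu
  have hvv := vnorm_one hnv
  have hu0 : u ≠ 0 := by
    intro h; rw [h] at huu; simp [dotProduct] at huu
  have hv0 : v ≠ 0 := by
    intro h; rw [h] at hvv; simp [dotProduct] at hvv
  have hL2 := notray_dim haddP hsmulP hu hu0 hnru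
  have hM2 := notray_dim haddQ hsmulQ hv hv0 hnrv
  set L := Submodule.span ℝ (faceAt P u) with hLdef
  set M := Submodule.span ℝ (faceAt Q v) with hMdef
  have huL : u ∈ L := Submodule.subset_span (mem_faceAt_self hu)
  have hvM : v ∈ M := Submodule.subset_span (mem_faceAt_self hv)
  set t := u ⬝ᵥ v with htdef
  have hvu : v ⬝ᵥ u = t := dotProduct_comm v u
  -- t > -1
  have huvsum : (u + v) ⬝ᵥ (u + v) = 2 + 2 * t := by
    rw [add_dotProduct, dotProduct_add, dotProduct_add, huu, hvv, hvu]
    ring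
  have ht_ge : -1 ≤ t := by
    have := dp_self_nonneg (u + v)
    nlinarith
  have ht_ne : t ≠ -1 := by
    intro h
    apply hne
    have hz : (u + v) ⬝ᵥ (u + v) = 0 := by rw [huvsum, h]; ring
    have := dotProduct_self_eq_zero.mp hz
    exact eq_neg_of_add_eq_zero_left this
  have ht1 : -1 < t := lt_of_le_of_ne ht_ge (Ne.symm ht_ne)
  -- stationarity on both sides
  obtain ⟨ht0, hstatP⟩ := stationary haddP hsmulP hu hv huu hnv hε hmin hL2
  have hminQ : ∀ u' ∈ Q, ∀ v' ∈ P, vnorm u' = 1 → vnorm v' = 1 →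
      vnorm (u' - v) < ε → vnorm (v' - u) < ε → v ⬝ᵥ u ≤ u' ⬝ᵥ v' := by
    intro u' hu' v' hv' h1 h2 h3 h4
    rw [dotProduct_comm v u, dotProduct_comm u' v']
    exact hmin v' hv' u' hu' h2 h1 h4 h3
  obtain ⟨-, hstatQ⟩ := stationary haddQ hsmulQ hv hu hvv hnu hε hminQ hM2
  -- common unit direction
  obtain ⟨w, hwL, hwM, hww⟩ := exists_unit_inter hn hL2 hM2
  set α := w ⬝ᵥ u with hαdef
  set β := w ⬝ᵥ v with hβdef
  have hstat1 : (w - α • u) ⬝ᵥ v = 0 := by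
    apply hstatP _ (Submodule.sub_mem L hwL (Submodule.smul_mem L α huL))
    rw [sub_dotProduct, smul_dotProduct, smul_eq_mul, huu]
    ring
  have hβα : β = α * t := by
    rw [sub_dotProduct, smul_dotProduct, smul_eq_mul] at hstat1
    rw [hβdef]
    rw [← htdef] at hstat1
    linarith
  have hstat2 : (w - β • v) ⬝ᵥ u = 0 := by
    apply hstatQ _ (Submodule.sub_mem M hwM (Submodule.smul_mem M β hvM))
    rw [sub_dotProduct, smul_dotProduct, smul_eq_mul, hvv]
    ring
  have hαβ : α = β * t := by
    rw [sub_dotProduct, smul_dotProduct, smul_eq_mul, hvu] at hstat2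
    rw [hαdef]
    linarith
  have hα0 : α = 0 := by
    have hαt : α * (1 - t * t) = 0 := by
      linear_combination hαβ + t * hβα
    have ht2 : 0 < 1 - t * t := by nlinarith
    rcases mul_eq_zero.mp hαt with h | h
    · exact h
    · linarith
  have hβ0 : β = 0 := by rw [hβα, hα0, zero_mul]
  have hwu : w ⬝ᵥ u = 0 := hα0
  have hwv : w ⬝ᵥ v = 0 := hβ0
  -- second-order condition with a = w, b = -w
  obtain ⟨δ₁, hδ₁, hpert1⟩ := perturb haddP hsmulP hu hwL
  obtain ⟨δ₂, hδ₂, hpert2⟩ := perturb haddQ hsmulQ hv (Submodule.neg_mem M hwM)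
  set s := min (min δ₁ δ₂) (ε / 4) with hsdef
  have hs0 : 0 < s := lt_min (lt_min hδ₁ hδ₂) (by positivity)
  have hs1 : s ≤ δ₁ := le_trans (min_le_left _ _) (min_le_left _ _)
  have hs2 : s ≤ δ₂ := le_trans (min_le_left _ _) (min_le_right _ _)
  have hsε : 2 * s < ε := by
    have := min_le_right (min δ₁ δ₂) (ε / 4)
    rw [← hsdef] at this
    linarith
  have hnwv : (-w) ⬝ᵥ v = 0 := by rw [neg_dotProduct, hwv, neg_zero]
  have hnww : (-w) ⬝ᵥ (-w) = 1 := by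
    rw [neg_dotProduct, dotProduct_neg, hww]; ring
  have h2 := engine2 hsmulP hsmulQ huu hvv hwu hww hnwv hnww hε hmin hs0 hsε
    (hpert1 s hs0.le hs1) (hpert2 s hs0.le hs2)
  have hRHS : (u + s • w) ⬝ᵥ (v + s • (-w)) = u ⬝ᵥ v - s^2 := by
    have huw : u ⬝ᵥ w = 0 := by rw [dotProduct_comm]; exact hwu
    simp only [dotProduct_add, add_dotProduct, dotProduct_smul,
      smul_dotProduct, dotProduct_neg, neg_dotProduct,
      huw, hwu, hwv, hww, smul_eq_mul]
    ring
  rw [hRHS, ← htdef] at h2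
  -- t * (1 + s^2) ≤ t - s^2  forces t ≤ -1
  nlinarith [sq_nonneg s, mul_pos hs0 hs0]
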